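/- Let n₁, n₂ ≥ 0 and c ∈ ℝ. The function r(s) = 1 + 2(1−s)n₁ + 2s n₂ − 4√(s(1−s))·c on s ∈ [0,1] attains its minimum value r_min = 1 + n₁ + n₂ − √((n₁−n₂)² + 4c²), provided c ≥ 0. -/

import Mathlib

/-- Minimization of the Duan–Simon value over the mixing parameter: for
`n₁, n₂ ≥ 0` and `c ≥ 0`, the function
`r(s) = 1 + 2(1−s)n₁ + 2s n₂ − 4√(s(1−s)) c` on `s ∈ [0,1]` attains the
minimum value `1 + n₁ + n₂ − √((n₁−n₂)² + 4c²)`. -/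
theorem duan_simon_minimization (n₁ n₂ c : ℝ) (hn₁ : 0 ≤ n₁) (hn₂ : 0 ≤ n₂) (hc : 0 ≤ c) :
    IsLeast
      ((fun s : ℝ => 1 + 2 * (1 - s) * n₁ + 2 * s * n₂ - 4 * Real.sqrt (s * (1 - s)) * c) ''
        Set.Icc (0 : ℝ) 1)
      (1 + n₁ + n₂ - Real.sqrt ((n₁ - n₂) ^ 2 + 4 * c ^ 2)) := by
  set d := n₁ - n₂ with hd
  set R := Real.sqrt (d ^ 2 + 4 * c ^ 2) with hRdef
  have hEnn : (0:ℝ) ≤ d ^ 2 + 4 * c ^ 2 := by positivity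
  have hR0 : 0 ≤ R := Real.sqrt_nonneg _
  have hR2 : R ^ 2 = d ^ 2 + 4 * c ^ 2 := Real.sq_sqrt hEnn
  constructor
  · -- membership: exhibit an s attaining the minimum
    rcases eq_or_lt_of_le hR0 with hR | hRpos
    · -- R = 0 : then d = 0 and c = 0, take s = 0
      have h0 : d ^ 2 + 4 * c ^ 2 = 0 := by
        have := hR2; rw [← hR] at this; nlinarith
      have hdz : d = 0 := by nlinarith [sq_nonneg d, sq_nonneg c]
      have hcz : c = 0 := by nlinarith [sq_nonneg d, sq_nonneg c]
      refine ⟨0, by simp, ?_⟩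
      simp only [Real.sqrt_zero, mul_zero, zero_mul, mul_one]
      linarith [hd, hdz, hR]
    · -- R > 0 : take s = (1 + d/R)/2
      have habs : d ≤ R ∧ -R ≤ d := by
        constructor <;> nlinarith [sq_nonneg c, hR2]
      refine ⟨(1 + d / R) / 2, ?_, ?_⟩
      · constructor
        · have : -R ≤ d := habs.2
          have : -1 ≤ d / R := by
            rw [le_div_iff₀ hRpos]; linarith
          linarith
        · have : d ≤ R := habs.1
          have : d / R ≤ 1 := by
            rw [div_le_one hRpos]; linarith
          linarith
      · have hsq : (1 + d / R) / 2 * (1 - (1 + d / R) / 2) = (c / R) ^ 2 := by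
          field_simp
          nlinarith [hR2]
        simp only [hsq, Real.sqrt_sq (div_nonneg hc hR0)]
        field_simp
        linear_combination hR2 + d*hd
  · -- lower bound
    rintro y ⟨s, ⟨hs0, hs1⟩, rfl⟩
    simp only
    set q := Real.sqrt (s * (1 - s)) with hq
    have hq0 : 0 ≤ q := Real.sqrt_nonneg _
    have hq2 : q ^ 2 = s * (1 - s) := Real.sq_sqrt (by nlinarith)
    have key : (2 * s - 1) * d + 4 * q * c ≤ R := by
      have h1 : ((2 * s - 1) * d + 4 * q * c) ^ 2 ≤ d ^ 2 + 4 * c ^ 2 := by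
        nlinarith [sq_nonneg ((2 * s - 1) * 2 * c - 2 * q * d), hq2]
      calc (2 * s - 1) * d + 4 * q * c ≤ |(2 * s - 1) * d + 4 * q * c| := le_abs_self _
        _ = Real.sqrt (((2 * s - 1) * d + 4 * q * c) ^ 2) := (Real.sqrt_sq_eq_abs _).symm
        _ ≤ R := Real.sqrt_le_sqrt h1
    have : 2 * (1 - s) * n₁ + 2 * s * n₂ = n₁ + n₂ - ((2 * s - 1) * d) := by
      rw [hd]; ring
    linarith [key, this.ge, this.le]
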